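/- A permutation π is layered if and only if it has no distant inverse-descent, i.e., no pair of indices j, k with k ≥ j + 2 and π(j) = π(k) + 1. -/

import Mathlib

/-- `w` is a permutation of length `n`: a word on `{1,...,n}` with each letter occurring once. -/
def IsPermWord (n : Nat) (w : List Nat) : Prop :=
  w.length = n ∧ w.Nodup ∧ ∀ x ∈ w, 1 ≤ x ∧ x ≤ n

/-- Build a layered word from a list of layer lengths, starting above value `a`:
a layer of length `k` is the decreasing run `a+k, ..., a+2, a+1`. -/
def layeredFrom : Nat → List Nat → List Nat
  | _, [] => []
  | a, k :: ks => ((List.range k).map (fun i => a + k - i)) ++ layeredFrom (a + k) ks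

/-- A permutation (word) is layered if it is a direct sum of nonempty decreasing
permutations. -/
def IsLayered (w : List Nat) : Prop :=
  ∃ ls : List Nat, (∀ l ∈ ls, 0 < l) ∧ w = layeredFrom 0 ls

/-- `π` has a distant inverse-descent: indices j, k with k ≥ j + 2 and π(j) = π(k) + 1. -/
def HasDistantInvDesc (p : List Nat) : Prop :=
  ∃ j k, j + 2 ≤ k ∧ k < p.length ∧ p.getD j 0 = p.getD k 0 + 1

lemma lf_mem {a : Nat} {ls : List Nat} :
    ∀ x ∈ layeredFrom a ls, a < x := by
  induction ls generalizing a with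
  | nil => simp [layeredFrom]
  | cons m ks ih =>
    intro x hx
    rw [layeredFrom] at hx
    rcases List.mem_append.mp hx with h | h
    · simp only [List.mem_map, List.mem_range] at h
      obtain ⟨i, hi, rfl⟩ := h
      omega
    · have := ih x h
      omega

lemma lf_no_ddesc {a : Nat} {ls : List Nat} :
    ¬ HasDistantInvDesc (layeredFrom a ls) := by
  induction ls generalizing a with
  | nil => rintro ⟨j, k, hjk, hk, _⟩; simp [layeredFrom] at hk
  | cons m ks ih =>
    rintro ⟨j, k, hjk, hk, heq⟩
    rw [layeredFrom] at hk heq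
    set L := (List.range m).map (fun i => a + m - i) with hL
    have hLlen : L.length = m := by simp [hL]
    have hklen : k < L.length + (layeredFrom (a + m) ks).length := by
      simpa using hk
    have hLget : ∀ i, (hi : i < m) → L.getD i 0 = a + m - i := by
      intro i hi
      rw [List.getD_eq_getElem _ _ (by omega)]
      simp [hL]
    by_cases hkm : k < m
    · have hj : j < m := by omega
      rw [List.getD_append _ _ _ _ (by omega), List.getD_append _ _ _ _ (by omega),
        hLget j hj, hLget k hkm] at heq
      omega
    · push_neg at hkm
      by_cases hjm : j < m
      · rw [List.getD_append _ _ _ _ (by omega),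
          List.getD_append_right _ _ _ _ (by omega), hLget j hjm] at heq
        have hkl : k - L.length < (layeredFrom (a + m) ks).length := by omega
        have hmem : (layeredFrom (a + m) ks).getD (k - L.length) 0 ∈ layeredFrom (a + m) ks := by
          rw [List.getD_eq_getElem _ _ hkl]
          exact List.getElem_mem hkl
        have := lf_mem _ hmem
        omega
      · push_neg at hjm
        rw [List.getD_append_right _ _ _ _ (by omega),
            List.getD_append_right _ _ _ _ (by omega)] at heq
        exact ih ⟨j - L.length, k - L.length, by omega, by omega, heq⟩

lemma toLayered : ∀ N : Nat, ∀ (p : List Nat) (a : Nat), p.length = N → p.Nodup →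
    (∀ x ∈ p, a < x ∧ x ≤ a + N) → ¬ HasDistantInvDesc p →
    ∃ ls, (∀ l ∈ ls, 0 < l) ∧ p = layeredFrom a ls := by
  intro N
  induction N using Nat.strong_induction_on with
  | _ N IH =>
  intro p a hlen hnd hbd hnod
  cases p with
  | nil => exact ⟨[], by simp, by simp [layeredFrom]⟩
  | cons h t =>
  set p : List Nat := h :: t with hp
  have hNpos : 0 < N := by rw [← hlen]; simp [hp]
  have hhmem : h ∈ p := by simp [hp]
  obtain ⟨hh1, hh2⟩ := hbd h hhmem
  set m : Nat := h - a with hm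
  have hm1 : 0 < m := by omega
  have hm2 : m ≤ N := by omega
  -- every value in (a, a+N] occurs in p
  have htf : p.toFinset = Finset.Ioc a (a + N) := by
    apply Finset.eq_of_subset_of_card_le
    · intro x hx
      obtain ⟨h1, h2⟩ := hbd x (List.mem_toFinset.mp hx)
      exact Finset.mem_Ioc.mpr ⟨h1, h2⟩
    · rw [List.toFinset_card_of_nodup hnd, hlen, Nat.card_Ioc]
      omega
  have hmemall : ∀ v, a < v → v ≤ a + N → v ∈ p := by
    intro v h1 h2
    have : v ∈ p.toFinset := by
      rw [htf]; exact Finset.mem_Ioc.mpr ⟨h1, h2⟩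
    exact List.mem_toFinset.mp this
  -- Step A: the first m entries are a+m, ..., a+1
  have hA : ∀ i, i < m → p.getD i 0 = a + m - i := by
    intro i
    induction i using Nat.strong_induction_on with
    | _ i IHi =>
    intro hi
    cases i with
    | zero =>
      show p.getD 0 0 = a + m - 0
      simp [hp]; omega
    | succ i =>
      have hv1 : a < a + (m - (i + 1)) := by omega
      have hv2 : a + (m - (i + 1)) ≤ a + N := by omega
      obtain ⟨k, hk, hpk⟩ := List.mem_iff_getElem.mp (hmemall _ hv1 hv2)
      have hpkD : p.getD k 0 = a + (m - (i + 1)) := by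
        rw [List.getD_eq_getElem _ _ hk]; exact hpk
      have hpiD : p.getD i 0 = a + m - i := IHi i (by omega) (by omega)
      have heq' : p.getD i 0 = p.getD k 0 + 1 := by rw [hpiD, hpkD]; omega
      have hk2 : ¬ (i + 2 ≤ k) := fun hc => hnod ⟨i, k, hc, hk, heq'⟩
      have hki : k = i + 1 := by
        by_contra hne
        have hkle : k ≤ i := by omega
        have := IHi k (by omega) (by omega)
        rw [hpkD] at this
        omega
      rw [hki] at hpkD
      rw [hpkD]
      omega
  have hmle : m ≤ p.length := by omega
  -- Step B: the first m entries form a decreasing layer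
  have htake : p.take m = (List.range m).map (fun i => a + m - i) := by
    apply List.ext_getElem
    · simp; omega
    · intro i h1 h2
      have hi : i < m := by simpa using h2
      have hgd : p.getD i 0 = a + m - i := hA i hi
      rw [List.getD_eq_getElem _ _ (by omega)] at hgd
      simp only [List.getElem_take, List.getElem_map, List.getElem_range]
      exact hgd
  -- Step C: the rest is a permutation of (a+m, a+N] with no distant inverse-descent
  set q : List Nat := p.drop m with hq
  have hqlen : q.length = N - m := by simp [hq]; omega
  have hqnd : q.Nodup := (List.drop_sublist m p).nodup hnd
  have hqbd : ∀ x ∈ q, a + m < x ∧ x ≤ a + m + (N - m) := by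
    intro x hx
    obtain ⟨j, hj, hqj⟩ := List.mem_iff_getElem.mp hx
    have hxp : x ∈ p := List.drop_subset m p hx
    obtain ⟨hx1, hx2⟩ := hbd x hxp
    constructor
    · by_contra hle
      push_neg at hle
      -- x ≤ a + m, so x occurs among the first m entries
      have hi : a + m - x < m := by omega
      have hgd : p.getD (a + m - x) 0 = x := by rw [hA _ hi]; omega
      rw [List.getD_eq_getElem _ _ (by omega)] at hgd
      have hd : q[j]'hj = p[m + j]'(by simp [hq] at hj ⊢; omega) := List.getElem_drop
      rw [hd] at hqj
      have : a + m - x = m + j :=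
        (List.Nodup.getElem_inj_iff hnd).mp (by rw [hgd, hqj])
      omega
    · omega
  have hqnod : ¬ HasDistantInvDesc q := by
    rintro ⟨j, k, hjk, hk, heq⟩
    apply hnod
    refine ⟨m + j, m + k, by omega, by omega, ?_⟩
    have hjq : j < q.length := by omega
    have e1 : p.getD (m + j) 0 = q.getD j 0 := by
      rw [List.getD_eq_getElem _ _ (by omega), List.getD_eq_getElem _ _ hjq]
      exact (List.getElem_drop).symm
    have e2 : p.getD (m + k) 0 = q.getD k 0 := by
      rw [List.getD_eq_getElem _ _ (by omega), List.getD_eq_getElem _ _ hk]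
      exact (List.getElem_drop).symm
    rw [e1, e2]; exact heq
  obtain ⟨ls, hls, hlq⟩ := IH (N - m) (by omega) q (a + m) hqlen hqnd hqbd hqnod
  refine ⟨m :: ls, ?_, ?_⟩
  · intro l hl
    rcases List.mem_cons.mp hl with rfl | hl
    · exact hm1
    · exact hls l hl
  · rw [layeredFrom, ← htake, ← hlq]
    exact (List.take_append_drop m p).symm

/-- A permutation is layered if and only if it has no distant inverse-descent. -/
theorem layered_iff_no_distant_inverse_descent (n : Nat) (p : List Nat)
    (hperm : IsPermWord n p) :
    IsLayered p ↔ ¬ HasDistantInvDesc p := by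
  constructor
  · rintro ⟨ls, hls, rfl⟩
    exact lf_no_ddesc
  · intro hno
    obtain ⟨hlen, hnd, hbd⟩ := hperm
    obtain ⟨ls, h1, h2⟩ := toLayered n p 0 hlen hnd
      (fun x hx => ⟨(hbd x hx).1, by simpa using (hbd x hx).2⟩) hno
    exact ⟨ls, h1, h2⟩
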